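/- For a function z : {0,1}^3 → ℝ that is invariant under global bit complementation (z_s = z_{¬s} for all s), there exist edge weights w_ab, w_ac, w_bc and a constant c such that for all s ∈ {0,1}^3, z_s = w_ab·[s_a ≠ s_b] + w_ac·[s_a ≠ s_c] + w_bc·[s_b ≠ s_c] + c; explicitly c = z_{000}, w_ab + w_ac = z_{100} - z_{000}, w_ab + w_bc = z_{010} - z_{000}, w_ac + w_bc = z_{001} - z_{000}, and this 3×3 system in (w_ab, w_ac, w_bc) is uniquely solvable. -/
import Mathlib


/-- Any function `z : {0,1}³ → ℝ` invariant under global bit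
complementation is exactly representable by three edge weights plus a
constant, with the explicit formulas; the underlying 3×3 system is uniquely
solvable. -/
theorem stmt_14 (z : Bool → Bool → Bool → ℝ)
    (hinv : ∀ a b c, z a b c = z (!a) (!b) (!c)) :
    (∃ wab wac wbc cst : ℝ,
      (∀ a b c, z a b c = wab * (if a ≠ b then (1 : ℝ) else 0)
          + wac * (if a ≠ c then (1 : ℝ) else 0)
          + wbc * (if b ≠ c then (1 : ℝ) else 0) + cst) ∧
      cst = z false false false ∧
      wab + wac = z true false false - z false false false ∧
      wab + wbc = z false true false - z false false false ∧
      wac + wbc = z false false true - z false false false) ∧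
    ∀ r1 r2 r3 : ℝ, ∃! w : ℝ × ℝ × ℝ,
      w.1 + w.2.1 = r1 ∧ w.1 + w.2.2 = r2 ∧ w.2.1 + w.2.2 = r3 := by

  constructor
  · refine ⟨(z true false false + z false true false - z false false true - z false false false)/2,
      (z true false false + z false false true - z false true false - z false false false)/2,
      (z false true false + z false false true - z true false false - z false false false)/2,
      z false false false, ?_, rfl, by ring, by ring, by ring⟩
    intro a b c
    have h1 := hinv true false false
    have h2 := hinv false true false
    have h3 := hinv false false true
    have h4 := hinv false false false
    cases a <;> cases b <;> cases c <;> simp_all <;> ring_nf <;> linarith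
  · intro r1 r2 r3
    refine ⟨((r1+r2-r3)/2, (r1+r3-r2)/2, (r2+r3-r1)/2), ⟨by ring, by ring, by ring⟩, ?_⟩
    rintro ⟨x, y, t⟩ ⟨h1, h2, h3⟩
    simp only [Prod.mk.injEq]
    refine ⟨by linarith, by linarith, by linarith⟩
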